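/- Let k ≥ 1, 0 ≤ n ≤ k+1, and let D be an abelian group. Suppose d assigns to every ordered pair (S, S') of distinct close size-n subsets of [0,k] an element d(S,S') ∈ D, such that d(S',S) = −d(S,S') for all close pairs, and d(S,S') + d(S',S'') = d(S,S'') whenever S, S', S'' are pairwise distinct and pairwise close size-n subsets. Then there exists a function f from the set of all size-n subsets of [0,k] to D such that d(S,S') = f(S') − f(S) for every close pair (S,S'). (Equivalently: every D-valued simplicial 1-cocycle on the simplicial complex X(n,k), whose vertices are size-n subsets of [0,k], whose edges are close pairs, and whose 2-simplices are pairwise close triples, is a coboundary; this expresses the vanishing of H^1(X(n,k), D), which follows from the simple connectivity of |X(n,k)| proved in the paper.) -/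
import Mathlib

/-- Two finite sets of integers are *close* if there is a bijection `g : S → S'`
with `g i ∈ {i-1, i, i+1}` for every `i ∈ S`. -/
def IsClose (S S' : Finset ℤ) : Prop :=
  ∃ g : ℤ → ℤ, Set.BijOn g ↑S ↑S' ∧ ∀ i ∈ S, g i = i - 1 ∨ g i = i ∨ g i = i + 1

namespace Stmt5Aux


variable {n : ℕ}

/-- The finset of values of a tuple. -/
def tF (a : Fin n → ℤ) : Finset ℤ := Finset.image a Finset.univ

/-- Lowering operation. -/
def Lo (a : Fin n → ℤ) : Fin n → ℤ := fun i => if (i : ℤ) < a i then a i - 1 else a i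

/-- Weight used for termination. -/
def wsum (a : Fin n → ℤ) : ℕ := ∑ i, (a i - (i : ℤ)).toNat

/-- Validity: strictly monotone with values in `[0,k]`. -/
def Vd (k : ℤ) (a : Fin n → ℤ) : Prop :=
  StrictMono a ∧ ∀ i, 0 ≤ a i ∧ a i ≤ k

/-- Closeness of tuples: coordinatewise distance at most 1. -/
def Cl (a b : Fin n → ℤ) : Prop := ∀ i, a i - 1 ≤ b i ∧ b i ≤ a i + 1

lemma cl_symm {a b : Fin n → ℤ} (h : Cl a b) : Cl b a := fun i => by have := h i; omega

lemma idx_le {a : Fin n → ℤ} (ha : StrictMono a) (h0 : ∀ i, 0 ≤ a i) (i : Fin n) :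
    (i : ℤ) ≤ a i := by
  obtain ⟨iv, hv⟩ := i
  induction iv with
  | zero => exact h0 _
  | succ m ih =>
    have hm : m < n := Nat.lt_of_succ_lt hv
    have h1 := ih hm
    have h2 : a ⟨m, hm⟩ < a ⟨m + 1, hv⟩ := ha (by simp [Fin.lt_def])
    push_cast at h1 ⊢
    omega

lemma tF_card {a : Fin n → ℤ} (ha : Function.Injective a) : (tF a).card = n := by
  rw [tF, Finset.card_image_of_injective _ ha, Finset.card_univ, Fintype.card_fin]

lemma mem_tF {a : Fin n → ℤ} {x : ℤ} : x ∈ tF a ↔ ∃ i, a i = x := by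
  simp [tF]

lemma tF_subset {k : ℤ} {a : Fin n → ℤ} (ha : Vd k a) : tF a ⊆ Finset.Icc 0 k := by
  intro x hx
  obtain ⟨i, rfl⟩ := mem_tF.mp hx
  exact Finset.mem_Icc.mpr (ha.2 i)

lemma tF_inj {a b : Fin n → ℤ} (ha : StrictMono a) (hb : StrictMono b) (h : tF a = tF b) :
    a = b := by
  have hca : (tF a).card = n := tF_card ha.injective
  have h1 : a = ⇑((tF a).orderEmbOfFin hca) :=
    Finset.orderEmbOfFin_unique hca (fun i => mem_tF.mpr ⟨i, rfl⟩) ha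
  have hcb : (tF b).card = n := tF_card hb.injective
  have h2 : b = ⇑((tF b).orderEmbOfFin hcb) :=
    Finset.orderEmbOfFin_unique hcb (fun i => mem_tF.mpr ⟨i, rfl⟩) hb
  have h2' : b = ⇑((tF a).orderEmbOfFin hca) :=
    Finset.orderEmbOfFin_unique hca (fun i => by rw [h]; exact mem_tF.mpr ⟨i, rfl⟩) hb
  exact h1.trans h2'.symm

lemma tF_ne {a b : Fin n → ℤ} (ha : StrictMono a) (hb : StrictMono b) (h : a ≠ b) :
    tF a ≠ tF b := fun he => h (tF_inj ha hb he)

lemma cl_isClose {a b : Fin n → ℤ} (ha : StrictMono a) (hb : StrictMono b) (h : Cl a b) :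
    IsClose (tF a) (tF b) := by
  classical
  refine ⟨fun x => if hx : ∃ i, a i = x then b hx.choose else x, ⟨?_, ?_, ?_⟩, ?_⟩
  · intro x hx
    have hx' : ∃ i, a i = x := mem_tF.mp (Finset.mem_coe.mp hx)
    simp only [dif_pos hx']
    exact Finset.mem_coe.mpr (mem_tF.mpr ⟨hx'.choose, rfl⟩)
  · intro x hx y hy hxy
    have hx' : ∃ i, a i = x := mem_tF.mp (Finset.mem_coe.mp hx)
    have hy' : ∃ i, a i = y := mem_tF.mp (Finset.mem_coe.mp hy)
    simp only [dif_pos hx', dif_pos hy'] at hxy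
    have := hb.injective hxy
    rw [← hx'.choose_spec, ← hy'.choose_spec, this]
  · intro y hy
    obtain ⟨i, rfl⟩ := mem_tF.mp (Finset.mem_coe.mp hy)
    have hx' : ∃ j, a j = a i := ⟨i, rfl⟩
    refine ⟨a i, Finset.mem_coe.mpr (mem_tF.mpr ⟨i, rfl⟩), ?_⟩
    simp only [dif_pos hx']
    have : hx'.choose = i := ha.injective hx'.choose_spec
    rw [this]
  · intro x hx
    have hx' : ∃ i, a i = x := mem_tF.mp hx
    simp only [dif_pos hx']
    have hi := hx'.choose_spec
    have h1 := h hx'.choose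
    omega

lemma isClose_symm {S S' : Finset ℤ} (h : IsClose S S') : IsClose S' S := by
  obtain ⟨g, hbij, hstep⟩ := h
  refine ⟨Function.invFunOn g ↑S, Set.BijOn.symm hbij.invOn_invFunOn.symm hbij, ?_⟩
  intro y hy
  have hy' : y ∈ (↑S' : Set ℤ) := Finset.mem_coe.mpr hy
  obtain ⟨x, hxS, hgx⟩ := hbij.surjOn hy'
  have hex : ∃ a ∈ (↑S : Set ℤ), g a = y := ⟨x, hxS, hgx⟩
  have hmem := Function.invFunOn_mem hex
  have heq := Function.invFunOn_eq hex
  have hst := hstep _ (Finset.mem_coe.mp hmem)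
  omega

lemma close_lower {S S' : Finset ℤ} (hS : S.card = n) (hS' : S'.card = n)
    (h : IsClose S S') (i : Fin n) :
    (S.orderEmbOfFin hS) i - 1 ≤ (S'.orderEmbOfFin hS') i := by
  classical
  obtain ⟨g, hbij, hstep⟩ := h
  set a : Fin n → ℤ := fun j => S.orderEmbOfFin hS j with ha
  set b : Fin n → ℤ := fun j => S'.orderEmbOfFin hS' j with hb
  by_contra hcon
  push_neg at hcon
  have hcon2 : b i < a i - 1 := hcon
  have hamem : ∀ j, a j ∈ S := fun j => Finset.orderEmbOfFin_mem S hS j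
  have hbmem : ∀ j, b j ∈ S' := fun j => Finset.orderEmbOfFin_mem S' hS' j
  have haS : ∀ x ∈ S, ∃ j, a j = x := by
    intro x hx
    have : x ∈ Set.range (S.orderEmbOfFin hS) := by
      rw [Finset.range_orderEmbOfFin]; exact hx
    exact this
  have hAcard : (S.filter (· < a i)).card = (i : ℕ) := by
    have hEq : S.filter (· < a i) = (Finset.Iio i).image a := by
      ext x
      simp only [Finset.mem_filter, Finset.mem_image, Finset.mem_Iio]
      constructor
      · rintro ⟨hxS, hlt⟩
        obtain ⟨j, rfl⟩ := haS x hxS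
        exact ⟨j, (S.orderEmbOfFin hS).strictMono.lt_iff_lt.mp hlt, rfl⟩
      · rintro ⟨j, hj, rfl⟩
        exact ⟨hamem j, (S.orderEmbOfFin hS).strictMono hj⟩
    rw [hEq, Finset.card_image_of_injective _ (S.orderEmbOfFin hS).injective, Fin.card_Iio]
  have hBsub : S'.filter (· ≤ b i) ⊆ (S.filter (· < a i)).image g := by
    intro y hy
    rw [Finset.mem_filter] at hy
    obtain ⟨hyS', hyle⟩ := hy
    obtain ⟨x, hxS, hgx⟩ := hbij.surjOn (Finset.mem_coe.mpr hyS')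
    have hst := hstep x (Finset.mem_coe.mp hxS)
    refine Finset.mem_image.mpr ⟨x, Finset.mem_filter.mpr ⟨Finset.mem_coe.mp hxS, ?_⟩, hgx⟩
    omega
  have hBlow : (Finset.Iic i).image b ⊆ S'.filter (· ≤ b i) := by
    intro y hy
    obtain ⟨j, hj, rfl⟩ := Finset.mem_image.mp hy
    rw [Finset.mem_Iic] at hj
    exact Finset.mem_filter.mpr ⟨hbmem j, (S'.orderEmbOfFin hS').monotone hj⟩
  have h1 : (i : ℕ) + 1 ≤ (S'.filter (· ≤ b i)).card := by
    calc (i : ℕ) + 1 = ((Finset.Iic i).image b).card := by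
          rw [Finset.card_image_of_injective _ (S'.orderEmbOfFin hS').injective, Fin.card_Iic]
      _ ≤ _ := Finset.card_le_card hBlow
  have h2 : (S'.filter (· ≤ b i)).card ≤ (i : ℕ) :=
    le_trans (Finset.card_le_card hBsub) (le_trans Finset.card_image_le (le_of_eq hAcard))
  omega

lemma close_cl {S S' : Finset ℤ} (hS : S.card = n) (hS' : S'.card = n)
    (h : IsClose S S') :
    Cl (fun i => S.orderEmbOfFin hS i) (fun i => S'.orderEmbOfFin hS' i) := by
  intro i
  have h1 := close_lower hS hS' h i
  have h2 := close_lower hS' hS (isClose_symm h) i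
  beta_reduce
  exact ⟨by omega, by omega⟩






lemma wsum_lo_lt {a : Fin n → ℤ} (h : Lo a ≠ a) : wsum (Lo a) < wsum a := by
  apply Finset.sum_lt_sum
  · intro i _
    simp only [Lo]
    split <;> omega
  · have : ∃ i, Lo a i ≠ a i := by
      by_contra hc
      push_neg at hc
      exact h (funext hc)
    obtain ⟨i, hi⟩ := this
    refine ⟨i, Finset.mem_univ i, ?_⟩
    simp only [Lo] at hi ⊢
    split at hi
    · split
      · omega
      · omega
    · exact absurd rfl hi

lemma wsum_lt {a b : Fin n → ℤ} (hib : ∀ i : Fin n, (i : ℤ) ≤ b i)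
    (hle : ∀ i, b i ≤ a i) (hne : b ≠ a) : wsum b < wsum a := by
  apply Finset.sum_lt_sum
  · intro i _
    have := hib i; have := hle i
    omega
  · have : ∃ i, b i ≠ a i := by
      by_contra hc; push_neg at hc; exact hne (funext hc)
    obtain ⟨i, hi⟩ := this
    refine ⟨i, Finset.mem_univ i, ?_⟩
    have := hib i; have := hle i
    omega

lemma vd_lo {k : ℤ} {a : Fin n → ℤ} (ha : Vd k a) : Vd k (Lo a) := by
  have hidx := idx_le ha.1 (fun i => (ha.2 i).1)
  constructor
  · intro i j hij
    have h1 := ha.1 hij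
    have h2 := hidx i
    have h3 := hidx j
    have h4 : (i : ℤ) < (j : ℤ) := by exact_mod_cast hij
    simp only [Lo]
    split <;> split <;> omega
  · intro i
    have h2 := hidx i
    have := ha.2 i
    simp only [Lo]
    split <;> omega

lemma lo_le {a : Fin n → ℤ} (i : Fin n) : Lo a i ≤ a i := by
  simp only [Lo]; split <;> omega

lemma cl_lo {a : Fin n → ℤ} : Cl (Lo a) a := by
  intro i; simp only [Lo]; split <;> omega

variable {D : Type*} [AddCommGroup D]

def fAux (d : Finset ℤ → Finset ℤ → D) (a : Fin n → ℤ) : D :=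
  if h : Lo a = a then 0 else fAux d (Lo a) + d (tF (Lo a)) (tF a)
termination_by wsum a
decreasing_by exact wsum_lo_lt h

lemma fAux_eq (d : Finset ℤ → Finset ℤ → D) {a : Fin n → ℤ} (h : Lo a ≠ a) :
    fAux d a = fAux d (Lo a) + d (tF (Lo a)) (tF a) := by
  rw [fAux, dif_neg h]


lemma main_ind {k : ℤ} (d : Finset ℤ → Finset ℤ → D)
    (hskew : ∀ S S' : Finset ℤ, S ⊆ Finset.Icc 0 k → S' ⊆ Finset.Icc 0 k →
      S.card = n → S'.card = n → S ≠ S' → IsClose S S' → d S' S = - d S S')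
    (hcocycle : ∀ S S' S'' : Finset ℤ,
      S ⊆ Finset.Icc 0 k → S' ⊆ Finset.Icc 0 k → S'' ⊆ Finset.Icc 0 k →
      S.card = n → S'.card = n → S''.card = n →
      S ≠ S' → S' ≠ S'' → S ≠ S'' →
      IsClose S S' → IsClose S' S'' → IsClose S S'' →
      d S S' + d S' S'' = d S S'') :
    ∀ (N : ℕ) (a b : Fin n → ℤ), wsum a + wsum b ≤ N → Vd k a → Vd k b → Cl a b → a ≠ b →
      d (tF a) (tF b) = fAux d b - fAux d a := by
  intro N
  induction N with
  | zero =>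
    intro a b hN hva hvb hcl hne
    exfalso; apply hne
    funext i
    have hia := idx_le hva.1 (fun j => (hva.2 j).1) i
    have hib := idx_le hvb.1 (fun j => (hvb.2 j).1) i
    have hwa : wsum a = 0 := by omega
    have hwb : wsum b = 0 := by omega
    simp only [wsum] at hwa hwb
    have h1 := Finset.sum_eq_zero_iff.mp hwa i (Finset.mem_univ i)
    have h2 := Finset.sum_eq_zero_iff.mp hwb i (Finset.mem_univ i)
    omega
  | succ N IH =>
    intro a b hN hva hvb hcl hne
    have hia := idx_le hva.1 (fun j => (hva.2 j).1)
    have hib := idx_le hvb.1 (fun j => (hvb.2 j).1)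
    -- the comparable case, as a helper
    have key : ∀ a b : Fin n → ℤ, wsum a + wsum b ≤ N + 1 → Vd k a → Vd k b → Cl a b →
        (∀ i, b i ≤ a i) → b ≠ a → d (tF b) (tF a) = fAux d a - fAux d b := by
      clear hia hib hN hva hvb hcl hne a b
      intro a b hN hva hvb hcl hba hne
      have hia := idx_le hva.1 (fun j => (hva.2 j).1)
      have hib := idx_le hvb.1 (fun j => (hvb.2 j).1)
      have hLo : Lo a ≠ a := by
        have hex : ∃ i, b i ≠ a i := by
          by_contra hc; push_neg at hc; exact hne (funext hc)
        obtain ⟨i, hi⟩ := hex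
        have h1 := hba i; have h2 := hib i
        intro hE
        have hE' := congrFun hE i
        simp only [Lo] at hE'
        split at hE' <;> omega
      have hfa := fAux_eq d hLo
      have hvc : Vd k (Lo a) := vd_lo hva
      have hcb : ∀ i, Lo a i ≤ b i := by
        intro i
        have h1 := hba i; have h2 := hib i; have h3 := hia i; have h4 := hcl i
        simp only [Lo]; split <;> omega
      have hdca : d (tF (Lo a)) (tF a) = fAux d a - fAux d (Lo a) := by
        rw [hfa]; abel
      by_cases hbc : b = Lo a
      · subst hbc
        exact hdca
      · have hclcb : Cl (Lo a) b := by
          intro i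
          have h1 := hcb i; have h2 := hba i
          have h3 := lo_le (a := a) i; have h4 := cl_lo (a := a) i
          omega
        have hwc : wsum (Lo a) < wsum a := wsum_lo_lt hLo
        have hIH1 : d (tF (Lo a)) (tF b) = fAux d b - fAux d (Lo a) :=
          IH (Lo a) b (by omega) hvc hvb hclcb (fun h => hbc h.symm)
        have htri := hcocycle (tF (Lo a)) (tF b) (tF a)
          (tF_subset hvc) (tF_subset hvb) (tF_subset hva)
          (tF_card hvc.1.injective) (tF_card hvb.1.injective) (tF_card hva.1.injective)
          (tF_ne hvc.1 hvb.1 (fun h => hbc h.symm)) (tF_ne hvb.1 hva.1 hne)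
          (tF_ne hvc.1 hva.1 hLo)
          (cl_isClose hvc.1 hvb.1 hclcb)
          (cl_isClose hvb.1 hva.1 (by intro i; have := hba i; have := hcl i; omega))
          (cl_isClose hvc.1 hva.1 cl_lo)
        rw [hIH1, hdca] at htri
        have : d (tF b) (tF a) =
            (fAux d a - fAux d (Lo a)) - (fAux d b - fAux d (Lo a)) := by
          rw [← htri]; abel
        rw [this]; abel
    by_cases hba : ∀ i, b i ≤ a i
    · have h1 := key a b hN hva hvb hcl hba (fun h => hne h.symm)
      have h2 := hskew (tF b) (tF a) (tF_subset hvb) (tF_subset hva)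
        (tF_card hvb.1.injective) (tF_card hva.1.injective)
        (tF_ne hvb.1 hva.1 (fun h => hne h.symm))
        (cl_isClose hvb.1 hva.1 (cl_symm hcl))
      rw [h2, h1]; abel
    · by_cases hab : ∀ i, a i ≤ b i
      · exact key b a (by omega) hvb hva (cl_symm hcl) hab hne
      · push_neg at hba hab
        obtain ⟨i0, hi0⟩ := hba
        obtain ⟨j0, hj0⟩ := hab
        set m : Fin n → ℤ := fun i => min (a i) (b i) with hm
        have hvm : Vd k m :=
          ⟨fun i j hij => lt_min ((min_le_left _ _).trans_lt (hva.1 hij))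
              ((min_le_right _ _).trans_lt (hvb.1 hij)),
           fun i => ⟨le_min (hva.2 i).1 (hvb.2 i).1, (min_le_left _ _).trans (hva.2 i).2⟩⟩
        have hclam : Cl a m := by
          intro i
          have h1 := hcl i
          have h2 : m i ≤ a i := min_le_left _ _
          have h3 : a i - 1 ≤ m i := le_min (by omega) (by omega)
          omega
        have hclmb : Cl m b := by
          intro i
          have h1 := hcl i
          have h2 : m i ≤ b i := min_le_right _ _
          have h3 : b i - 1 ≤ m i := le_min (by omega) (by omega)
          omega
        have hma : m ≠ a := by
          intro h
          have h1 := congrFun h j0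
          have h2 : m j0 ≤ b j0 := min_le_right _ _
          omega
        have hmb : m ≠ b := by
          intro h
          have h1 := congrFun h i0
          have h2 : m i0 ≤ a i0 := min_le_left _ _
          omega
        have him : ∀ i : Fin n, (i : ℤ) ≤ m i := fun i => le_min (hia i) (hib i)
        have hwma : wsum m < wsum a := wsum_lt him (fun i => min_le_left _ _) hma
        have hwmb : wsum m < wsum b := wsum_lt him (fun i => min_le_right _ _) hmb
        have hIH1 : d (tF a) (tF m) = fAux d m - fAux d a :=
          IH a m (by omega) hva hvm hclam (fun h => hma h.symm)
        have hIH2 : d (tF m) (tF b) = fAux d b - fAux d m :=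
          IH m b (by omega) hvm hvb hclmb hmb
        have htri := hcocycle (tF a) (tF m) (tF b)
          (tF_subset hva) (tF_subset hvm) (tF_subset hvb)
          (tF_card hva.1.injective) (tF_card hvm.1.injective) (tF_card hvb.1.injective)
          (tF_ne hva.1 hvm.1 (fun h => hma h.symm)) (tF_ne hvm.1 hvb.1 hmb)
          (tF_ne hva.1 hvb.1 hne)
          (cl_isClose hva.1 hvm.1 hclam) (cl_isClose hvm.1 hvb.1 hclmb)
          (cl_isClose hva.1 hvb.1 hcl)
        rw [hIH1, hIH2] at htri
        rw [← htri]; abel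

lemma tF_enum {S : Finset ℤ} (h : S.card = n) :
    tF (fun i => S.orderEmbOfFin h i) = S := by
  ext x
  rw [mem_tF]
  constructor
  · rintro ⟨i, rfl⟩; exact Finset.orderEmbOfFin_mem S h i
  · intro hx
    have : x ∈ Set.range (S.orderEmbOfFin h) := by
      rw [Finset.range_orderEmbOfFin]; exact hx
    obtain ⟨i, hi⟩ := this
    exact ⟨i, hi⟩

end Stmt5Aux

/-- **Vanishing of `H¹` of the closeness complex `X(n,k)`.**
Every `D`-valued simplicial 1-cocycle on the complex whose vertices are the size-`n`
subsets of `[0,k]`, whose edges are pairs of distinct close subsets, and whose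
2-simplices are pairwise close (pairwise distinct) triples, is a coboundary. -/
theorem stmt_5 (k : ℤ) (hk : 1 ≤ k) (n : ℕ) (hn : (n : ℤ) ≤ k + 1)
    (D : Type*) [AddCommGroup D]
    (d : Finset ℤ → Finset ℤ → D)
    (hskew : ∀ S S' : Finset ℤ, S ⊆ Finset.Icc 0 k → S' ⊆ Finset.Icc 0 k →
      S.card = n → S'.card = n → S ≠ S' → IsClose S S' → d S' S = - d S S')
    (hcocycle : ∀ S S' S'' : Finset ℤ,
      S ⊆ Finset.Icc 0 k → S' ⊆ Finset.Icc 0 k → S'' ⊆ Finset.Icc 0 k →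
      S.card = n → S'.card = n → S''.card = n →
      S ≠ S' → S' ≠ S'' → S ≠ S'' →
      IsClose S S' → IsClose S' S'' → IsClose S S'' →
      d S S' + d S' S'' = d S S'') :
    ∃ f : Finset ℤ → D, ∀ S S' : Finset ℤ,
      S ⊆ Finset.Icc 0 k → S' ⊆ Finset.Icc 0 k →
      S.card = n → S'.card = n → S ≠ S' → IsClose S S' →
      d S S' = f S' - f S := by
  classical
  open Stmt5Aux in
  refine ⟨fun S => if h : S.card = n then fAux d (fun i => S.orderEmbOfFin h i) else 0, ?_⟩
  intro S S' hSk hS'k hScard hS'card hne hclose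
  set a : Fin n → ℤ := fun i => S.orderEmbOfFin hScard i with ha
  set b : Fin n → ℤ := fun i => S'.orderEmbOfFin hS'card i with hb
  have hasm : StrictMono a := (S.orderEmbOfFin hScard).strictMono
  have hbsm : StrictMono b := (S'.orderEmbOfFin hS'card).strictMono
  have hva : Vd k a := ⟨hasm, fun i => Finset.mem_Icc.mp (hSk (Finset.orderEmbOfFin_mem S hScard i))⟩
  have hvb : Vd k b := ⟨hbsm, fun i => Finset.mem_Icc.mp (hS'k (Finset.orderEmbOfFin_mem S' hS'card i))⟩
  have htfa : tF a = S := tF_enum hScard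
  have htfb : tF b = S' := tF_enum hS'card
  have hcl : Cl a b := close_cl hScard hS'card hclose
  have hab : a ≠ b := by
    intro h
    exact hne (htfa ▸ htfb ▸ congrArg tF h)
  have hmain := main_ind d hskew hcocycle (wsum a + wsum b) a b le_rfl hva hvb hcl hab
  rw [htfa, htfb] at hmain
  simp only [dif_pos hScard, dif_pos hS'card]
  exact hmain
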